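/- Let φ, ψ ∈ ℂ. Then both roots of the complex quadratic equation x² − φx + ψ = 0 have modulus less than one if and only if |φ − φ̄ψ| + |ψ|² < 1, where φ̄ denotes the complex conjugate of φ. Equivalently: (∀ x ∈ ℂ, x² − φx + ψ = 0 → |x| < 1) ↔ |φ − φ̄ψ| + |ψ|² < 1. -/

import Mathlib

private lemma aux_root_lt (r s : ℂ)
    (h : ‖r * (1 - ((‖s‖ : ℝ) : ℂ) ^ 2)
          + s * (1 - ((‖r‖ : ℝ) : ℂ) ^ 2)‖
        + (‖r‖ * ‖s‖) ^ 2 < 1) :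
    ‖r‖ < 1 := by
  by_contra hc
  push_neg at hc
  set a := ‖r‖ with ha
  set b := ‖s‖ with hb
  have ha0 : (0:ℝ) ≤ a := norm_nonneg r
  have hb0 : (0:ℝ) ≤ b := norm_nonneg s
  have hX0 : (0:ℝ) ≤ ‖r * (1 - ((b : ℝ) : ℂ) ^ 2)
      + s * (1 - ((a : ℝ) : ℂ) ^ 2)‖ := norm_nonneg _
  have hab : a * b < 1 := by nlinarith
  have hb1 : b < 1 := by nlinarith
  have h1 : ‖r * (1 - ((b : ℝ) : ℂ) ^ 2)‖ = a * (1 - b ^ 2) := by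
    rw [norm_mul]
    have : (1 - ((b : ℝ) : ℂ) ^ 2) = (((1 - b ^ 2 : ℝ)) : ℂ) := by push_cast; ring
    rw [this, Complex.norm_real, Real.norm_eq_abs, abs_of_nonneg (by nlinarith)]
  have h2 : ‖s * (1 - ((a : ℝ) : ℂ) ^ 2)‖ = b * (a ^ 2 - 1) := by
    rw [norm_mul]
    have : (1 - ((a : ℝ) : ℂ) ^ 2) = (((1 - a ^ 2 : ℝ)) : ℂ) := by push_cast; ring
    rw [this, Complex.norm_real, Real.norm_eq_abs, abs_of_nonpos (by nlinarith), ← hb]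
    ring
  have key : a * (1 - b ^ 2) ≤ ‖r * (1 - ((b : ℝ) : ℂ) ^ 2)
      + s * (1 - ((a : ℝ) : ℂ) ^ 2)‖ + b * (a ^ 2 - 1) := by
    have tri : ‖r * (1 - ((b : ℝ) : ℂ) ^ 2)‖ ≤
        ‖r * (1 - ((b : ℝ) : ℂ) ^ 2) + s * (1 - ((a : ℝ) : ℂ) ^ 2)‖
          + ‖s * (1 - ((a : ℝ) : ℂ) ^ 2)‖ := by
      have := norm_sub_le
        (r * (1 - ((b : ℝ) : ℂ) ^ 2) + s * (1 - ((a : ℝ) : ℂ) ^ 2))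
        (s * (1 - ((a : ℝ) : ℂ) ^ 2))
      simpa using this
    rw [h1] at tri
    rw [h2] at tri
    exact tri
  nlinarith [mul_nonneg (mul_nonneg (by linarith : (0:ℝ) ≤ a - 1)
      (by linarith : (0:ℝ) ≤ 1 - b)) (by linarith : (0:ℝ) ≤ 1 - a * b)]

/-- Lemma 3.1: both roots of the complex quadratic `x² − φx + ψ = 0` are of modulus
less than one if and only if `|φ − φ̄ψ| + |ψ|² < 1`. -/
theorem quadratic_roots_modulus_lt_one_iff (φ ψ : ℂ) :
    (∀ x : ℂ, x ^ 2 - φ * x + ψ = 0 → ‖x‖ < 1) ↔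
      ‖φ - (starRingEnd ℂ) φ * ψ‖ + (‖ψ‖) ^ 2 < 1 := by
  obtain ⟨w, hw⟩ : ∃ w : ℂ, w ^ 2 = φ ^ 2 - 4 * ψ :=
    IsAlgClosed.exists_pow_nat_eq (φ ^ 2 - 4 * ψ) (n := 2) (by norm_num)
  set r : ℂ := (φ + w) / 2 with hrdef
  set s : ℂ := (φ - w) / 2 with hsdef
  have hφ : φ = r + s := by rw [hrdef, hsdef]; ring
  have hψ : ψ = r * s := by rw [hrdef, hsdef]; field_simp; linear_combination hw
  have hcr : (starRingEnd ℂ) r * r = ((‖r‖ : ℝ) : ℂ) ^ 2 := by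
    rw [Complex.conj_mul']
  have hcs : (starRingEnd ℂ) s * s = ((‖s‖ : ℝ) : ℂ) ^ 2 := by
    rw [Complex.conj_mul']
  have idt : φ - (starRingEnd ℂ) φ * ψ
      = r * (1 - ((‖s‖ : ℝ) : ℂ) ^ 2) + s * (1 - ((‖r‖ : ℝ) : ℂ) ^ 2) := by
    rw [hφ, hψ, map_add]
    linear_combination (-s) * hcr + (-r) * hcs
  have habsψ : ‖ψ‖ = ‖r‖ * ‖s‖ := by
    rw [hψ, norm_mul]
  have hroot : ∀ x : ℂ, x ^ 2 - φ * x + ψ = 0 → x = r ∨ x = s := by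
    intro x hx
    have : (x - r) * (x - s) = 0 := by
      rw [hφ, hψ] at hx; linear_combination hx
    rcases mul_eq_zero.mp this with h | h
    · exact Or.inl (sub_eq_zero.mp h)
    · exact Or.inr (sub_eq_zero.mp h)
  have hr : r ^ 2 - φ * r + ψ = 0 := by rw [hφ, hψ]; ring
  have hs : s ^ 2 - φ * s + ψ = 0 := by rw [hφ, hψ]; ring
  constructor
  · intro h
    have ha : ‖r‖ < 1 := h r hr
    have hb : ‖s‖ < 1 := h s hs
    set a := ‖r‖
    set b := ‖s‖
    have ha0 : (0:ℝ) ≤ a := norm_nonneg r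
    have hb0 : (0:ℝ) ≤ b := norm_nonneg s
    rw [idt, habsψ]
    have e1 : ‖r * (1 - ((b : ℝ) : ℂ) ^ 2)‖ = a * (1 - b ^ 2) := by
      rw [norm_mul]
      have : (1 - ((b : ℝ) : ℂ) ^ 2) = (((1 - b ^ 2 : ℝ)) : ℂ) := by push_cast; ring
      rw [this, Complex.norm_real, Real.norm_eq_abs, abs_of_nonneg (by nlinarith)]
    have e2 : ‖s * (1 - ((a : ℝ) : ℂ) ^ 2)‖ = b * (1 - a ^ 2) := by
      rw [norm_mul]
      have : (1 - ((a : ℝ) : ℂ) ^ 2) = (((1 - a ^ 2 : ℝ)) : ℂ) := by push_cast; ring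
      rw [this, Complex.norm_real, Real.norm_eq_abs, abs_of_nonneg (by nlinarith)]
    have tri := norm_add_le (r * (1 - ((b : ℝ) : ℂ) ^ 2))
      (s * (1 - ((a : ℝ) : ℂ) ^ 2))
    rw [e1, e2] at tri
    nlinarith [mul_pos (mul_pos (by linarith : (0:ℝ) < 1 - a)
        (by linarith : (0:ℝ) < 1 - b)) (by nlinarith : (0:ℝ) < 1 - a * b)]
  · intro h x hx
    rw [idt, habsψ] at h
    have hra : ‖r‖ < 1 := aux_root_lt r s h
    have hsa : ‖s‖ < 1 := by
      apply aux_root_lt s r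
      have h' : ‖s * (1 - ((‖r‖ : ℝ) : ℂ) ^ 2)
          + r * (1 - ((‖s‖ : ℝ) : ℂ) ^ 2)‖
          + (‖s‖ * ‖r‖) ^ 2 < 1 := by
        rw [add_comm (s * _), mul_comm (‖s‖)]
        exact h
      exact h'
    rcases hroot x hx with rfl | rfl
    · exact hra
    · exact hsa
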